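/- Discrete entropy inequality for the semi-discrete DG scheme (Theorem 2.1, first part). Along any differentiable solution t ↦ (ρ_i(t))_i of the semi-discrete scheme, the discrete entropy satisfies the exact identity dẼ/dt = − Σ_i (h_i/2) Σ_{r=1}^{k+1} w_r · f((ρ_i)_r) · ((u_i)_r)² − Σ_i (α_{i+½}/2) · ( g((ρ_{i+1})_1) − g((ρ_i)_{k+1}) ) · ( H′((ρ_{i+1})_1) − H′((ρ_i)_{k+1}) ). Since H′ is strictly increasing, g is nondecreasing, α_{i+½} ≥ 0 and f ≥ 0, this implies the discrete entropy–entropy dissipation inequality dẼ/dt ≤ −Ĩ, where Ĩ = Σ_i (h_i/2) Σ_r w_r f((ρ_i)_r)((u_i)_r)² ≥ 0 is the discrete entropy dissipation. -/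

import Mathlib

open Matrix BigOperators

/-- Discrete entropy inequality for the 1D semi-discrete DG scheme
(Theorem 2.1, first part): along any differentiable solution of the
semi-discrete scheme, the discrete entropy `Ẽ` satisfies the exact identity
`dẼ/dt = −Ĩ − Σᵢ (αᵢ₊½/2)[g][H′]`, hence `dẼ/dt ≤ −Ĩ` with `Ĩ ≥ 0`. -/
theorem discrete_entropy_inequality_1d
    (k N : ℕ) (hk : 1 ≤ k) [NeZero N] (hN : 2 ≤ N)
    (hcell : ZMod N → ℝ) (hh : ∀ i, 0 < hcell i)
    (w : Fin (k+1) → ℝ) (hw : ∀ r, 0 < w r)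
    (M B D : Matrix (Fin (k+1)) (Fin (k+1)) ℝ)
    (hM : M = Matrix.diagonal w)
    (hB : B = Matrix.diagonal
      (fun r => if r = 0 then (-1 : ℝ) else if r = Fin.last k then 1 else 0))
    (hSBP : M * D + Dᵀ * M = B)
    (H f g : ℝ → ℝ)
    (hH : Differentiable ℝ H) (hH' : StrictMono (deriv H))
    (hf : ∀ s, 0 ≤ f s) (hg : Monotone g)
    (V : ZMod N → Fin (k+1) → ℝ)
    (hV : ∀ i, V i (Fin.last k) = V (i+1) 0)
    (K : ZMod N → ZMod N → Fin (k+1) → Fin (k+1) → ℝ)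
    (hKsym : ∀ i j r s, K i j r s = K j i s r)
    (hKsv : ∀ i j s, K i j (Fin.last k) s = K (i+1) j 0 s)
    (ρ ρ' : ℝ → ZMod N → Fin (k+1) → ℝ)
    (hρ : ∀ t i r, HasDerivAt (fun τ => ρ τ i r) (ρ' t i r) t)
    (ξ : ℝ → ZMod N → Fin (k+1) → ℝ)
    (hξ : ∀ t i r, ξ t i r = deriv H (ρ t i r) + V i r +
      ∑ j, (hcell j / 2) * ∑ s, w s * K i j r s * ρ t j s)
    (ξhat : ℝ → ZMod N → ℝ)
    (hξhat : ∀ t i, ξhat t i = (ξ t i (Fin.last k) + ξ t (i+1) 0) / 2)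
    (ξstar : ℝ → ZMod N → Fin (k+1) → ℝ)
    (hξstar : ∀ t i, ξstar t i = fun r =>
      if r = 0 then ξhat t (i-1) else if r = Fin.last k then ξhat t i else 0)
    (u : ℝ → ZMod N → Fin (k+1) → ℝ)
    (hu : ∀ t i, u t i
      = (2 / hcell i) • (M⁻¹ *ᵥ (-((Dᵀ * M) *ᵥ ξ t i) + B *ᵥ ξstar t i)))
    (α : ZMod N → ℝ) (hα : ∀ i, 0 ≤ α i)
    (Fhat : ℝ → ZMod N → ℝ)
    (hFhat : ∀ t i, Fhat t i =
      (f (ρ t (i+1) 0) * u t (i+1) 0 + f (ρ t i (Fin.last k)) * u t i (Fin.last k)) / 2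
      + (α i / 2) * (g (ρ t (i+1) 0) - g (ρ t i (Fin.last k))))
    (Fstar : ℝ → ZMod N → Fin (k+1) → ℝ)
    (hFstar : ∀ t i, Fstar t i = fun r =>
      if r = 0 then Fhat t (i-1) else if r = Fin.last k then Fhat t i else 0)
    (hscheme : ∀ t i, (fun r => ρ' t i r)
      = (2 / hcell i) • (M⁻¹ *ᵥ
          (-((Dᵀ * M) *ᵥ (fun r => f (ρ t i r) * u t i r)) + B *ᵥ Fstar t i)))
    (E : ℝ → ℝ)
    (hE : ∀ t, E t
      = (∑ i, (hcell i / 2) * ∑ r, w r * (H (ρ t i r) + V i r * ρ t i r))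
      + (1/2) * ∑ i, ∑ j, (hcell i / 2) * (hcell j / 2) *
          ∑ r, ∑ s, w r * w s * K i j r s * ρ t i r * ρ t j s)
    (t : ℝ) :
    HasDerivAt E
      (-(∑ i, (hcell i / 2) * ∑ r, w r * f (ρ t i r) * (u t i r)^2)
       - ∑ i, (α i / 2) * (g (ρ t (i+1) 0) - g (ρ t i (Fin.last k)))
            * (deriv H (ρ t (i+1) 0) - deriv H (ρ t i (Fin.last k)))) t
    ∧ (-(∑ i, (hcell i / 2) * ∑ r, w r * f (ρ t i r) * (u t i r)^2)
       - ∑ i, (α i / 2) * (g (ρ t (i+1) 0) - g (ρ t i (Fin.last k)))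
            * (deriv H (ρ t (i+1) 0) - deriv H (ρ t i (Fin.last k))))
      ≤ -(∑ i, (hcell i / 2) * ∑ r, w r * f (ρ t i r) * (u t i r)^2)
    ∧ 0 ≤ ∑ i, (hcell i / 2) * ∑ r, w r * f (ρ t i r) * (u t i r)^2 := by

  classical
  -- basic facts
  have hk0 : k ≠ 0 := by omega
  have hne : (Fin.last k) ≠ (0 : Fin (k+1)) := by
    intro h; have := congrArg Fin.val h; simp [Fin.last] at this; exact hk0 this
  -- sums over the two boundary nodes
  have hsum2 : ∀ tf : Fin (k+1) → ℝ, (∀ r, r ≠ 0 → r ≠ Fin.last k → tf r = 0) →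
      ∑ r, tf r = tf 0 + tf (Fin.last k) := by
    intro tf h0
    have key : ∀ r : Fin (k+1), tf r =
        (if r = 0 then tf 0 else 0) + (if r = Fin.last k then tf (Fin.last k) else 0) := by
      intro r
      by_cases h1 : r = 0 <;> by_cases h2 : r = Fin.last k
      · exact absurd (h1 ▸ h2).symm hne
      · simp [h1, h2, hk0]
      · simp [h1, h2, hk0]
      · simp [h1, h2, h0 r h1 h2]
    rw [Finset.sum_congr rfl (fun r _ => key r), Finset.sum_add_distrib]
    simp [Finset.sum_ite_eq']
  -- inverse of the mass matrix
  have hMinv : M⁻¹ = Matrix.diagonal (fun r => (w r)⁻¹) := by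
    rw [hM]
    apply Matrix.inv_eq_right_inv
    rw [Matrix.diagonal_mul_diagonal]
    have : (fun r => w r * (w r)⁻¹) = fun _ => (1:ℝ) :=
      funext fun r => mul_inv_cancel₀ (hw r).ne'
    rw [this, Matrix.diagonal_one]
  -- B acting on vectors
  have hBvec : ∀ (x : Fin (k+1) → ℝ) (r : Fin (k+1)), (B *ᵥ x) r =
      (if r = 0 then -(x 0) else if r = Fin.last k then x (Fin.last k) else 0) := by
    intro x r
    rw [hB, Matrix.mulVec_diagonal]
    by_cases h1 : r = 0 <;> by_cases h2 : r = Fin.last k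
    · exact absurd (h1 ▸ h2).symm hne
    · simp [h1, h2, hk0]
    · simp [h1, h2, hk0]
    · simp [h1, h2, hk0]
  have hBdot : ∀ x y : Fin (k+1) → ℝ,
      ∑ r, y r * (B *ᵥ x) r = y (Fin.last k) * x (Fin.last k) - y 0 * x 0 := by
    intro x y
    rw [hsum2 (fun r => y r * (B *ᵥ x) r)
      (fun r h1 h2 => by show y r * (B *ᵥ x) r = 0; rw [hBvec]; simp [h1, h2])]
    show y 0 * (B *ᵥ x) 0 + y (Fin.last k) * (B *ᵥ x) (Fin.last k) = _
    rw [hBvec, hBvec]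
    simp [hne, hk0]
    ring
  -- summation-by-parts, in dot-product form
  have hSBPdot : ∀ x y : Fin (k+1) → ℝ,
      ∑ r, x r * ((Dᵀ * M) *ᵥ y) r
      = (∑ r, x r * (B *ᵥ y) r) - ∑ r, ((Dᵀ * M) *ᵥ x) r * y r := by
    intro x y
    have hentry : ∀ r c : Fin (k+1), (Dᵀ * M) c r = (M * D) r c := by
      intro r c
      simp [Matrix.mul_apply, hM, Matrix.transpose_apply, Matrix.diagonal_apply,
        Finset.sum_ite_eq, Finset.sum_ite_eq', mul_comm]
    have hBe : ∀ r c : Fin (k+1), (M * D) r c + (Dᵀ * M) r c = B r c := by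
      intro r c
      have := congrFun (congrFun hSBP r) c
      simpa [Matrix.add_apply] using this
    have e1 : ∑ r, ((Dᵀ * M) *ᵥ x) r * y r
        = ∑ r, ∑ c, (M * D) r c * x r * y c := by
      simp only [Matrix.mulVec, dotProduct, Finset.sum_mul]
      rw [Finset.sum_comm]
      exact Finset.sum_congr rfl fun r _ => Finset.sum_congr rfl fun c _ => by
        rw [hentry r c]
    have e2 : ∑ r, x r * ((Dᵀ * M) *ᵥ y) r
        = ∑ r, ∑ c, (Dᵀ * M) r c * x r * y c := by
      simp only [Matrix.mulVec, dotProduct, Finset.mul_sum]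
      exact Finset.sum_congr rfl fun r _ => Finset.sum_congr rfl fun c _ => by ring
    have e3 : ∑ r, x r * (B *ᵥ y) r = ∑ r, ∑ c, B r c * x r * y c := by
      simp only [Matrix.mulVec, dotProduct, Finset.mul_sum]
      exact Finset.sum_congr rfl fun r _ => Finset.sum_congr rfl fun c _ => by ring
    rw [e1, e2, e3, eq_sub_iff_add_eq, ← Finset.sum_add_distrib]
    refine Finset.sum_congr rfl fun r _ => ?_
    rw [← Finset.sum_add_distrib]
    refine Finset.sum_congr rfl fun c _ => ?_
    rw [← hBe r c]; ring
  -- nodal form of the scheme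
  have hcomp_scheme : ∀ (i : ZMod N) (r : Fin (k+1)),
      (hcell i / 2) * (w r * ρ' t i r)
      = -(((Dᵀ * M) *ᵥ (fun r => f (ρ t i r) * u t i r)) r) + (B *ᵥ Fstar t i) r := by
    intro i r
    have h0 := congrFun (hscheme t i) r
    rw [hMinv] at h0
    simp only [Pi.smul_apply, smul_eq_mul, Matrix.mulVec_diagonal, Pi.add_apply,
      Pi.neg_apply] at h0
    rw [h0]
    have hwne := (hw r).ne'
    have hhne := (hh i).ne'
    field_simp
  -- nodal form of the velocity
  have hcomp_u : ∀ (i : ZMod N) (r : Fin (k+1)),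
      ((Dᵀ * M) *ᵥ ξ t i) r = (B *ᵥ ξstar t i) r - (hcell i / 2) * (w r * u t i r) := by
    intro i r
    have h0 := congrFun (hu t i) r
    rw [hMinv] at h0
    simp only [Pi.smul_apply, smul_eq_mul, Matrix.mulVec_diagonal, Pi.add_apply,
      Pi.neg_apply] at h0
    rw [h0]
    have hwne := (hw r).ne'
    have hhne := (hh i).ne'
    field_simp
    ring
  -- boundary values of the starred quantities
  have hξstar0 : ∀ i : ZMod N, ξstar t i 0 = ξhat t (i - 1) := by
    intro i; rw [hξstar]; simp
  have hξstarL : ∀ i : ZMod N, ξstar t i (Fin.last k) = ξhat t i := by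
    intro i; rw [hξstar]; simp [hne]
  have hFstar0 : ∀ i : ZMod N, Fstar t i 0 = Fhat t (i - 1) := by
    intro i; rw [hFstar]; simp
  have hFstarL : ∀ i : ZMod N, Fstar t i (Fin.last k) = Fhat t i := by
    intro i; rw [hFstar]; simp [hne]
  -- jump of ξ across an interface only sees H'
  have hjump : ∀ i : ZMod N, ξ t (i+1) 0 - ξ t i (Fin.last k)
      = deriv H (ρ t (i+1) 0) - deriv H (ρ t i (Fin.last k)) := by
    intro i
    rw [hξ, hξ, hV i]
    have : ∀ j : ZMod N, (hcell j / 2) * ∑ s, w s * K (i+1) j 0 s * ρ t j s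
        = (hcell j / 2) * ∑ s, w s * K i j (Fin.last k) s * ρ t j s := by
      intro j
      congr 1
      exact Finset.sum_congr rfl fun s _ => by rw [← hKsv i j s]
    rw [Finset.sum_congr rfl fun j _ => this j]
    ring
  -- reindexing of periodic sums
  have hreindex : ∀ φ : ZMod N → ℝ, ∑ i : ZMod N, φ (i - 1) = ∑ i, φ i := by
    intro φ
    exact Equiv.sum_comp (Equiv.subRight (1 : ZMod N)) φ
  -- nonnegativity of the dissipation
  have hI : 0 ≤ ∑ i, (hcell i / 2) * ∑ r, w r * f (ρ t i r) * (u t i r)^2 := by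
    refine Finset.sum_nonneg fun i _ => mul_nonneg (by linarith [hh i]) ?_
    refine Finset.sum_nonneg fun r _ => ?_
    have := sq_nonneg (u t i r)
    have := hf (ρ t i r)
    have := (hw r).le
    positivity
  -- nonnegativity of the jump terms
  have hJ : 0 ≤ ∑ i, (α i / 2) * (g (ρ t (i+1) 0) - g (ρ t i (Fin.last k)))
      * (deriv H (ρ t (i+1) 0) - deriv H (ρ t i (Fin.last k))) := by
    refine Finset.sum_nonneg fun i _ => ?_
    have hα2 : 0 ≤ α i / 2 := by linarith [hα i]
    rcases le_total (ρ t i (Fin.last k)) (ρ t (i+1) 0) with h | h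
    · exact mul_nonneg (mul_nonneg hα2 (by linarith [hg h])) (by linarith [hH'.monotone h])
    · have h1 : g (ρ t (i+1) 0) - g (ρ t i (Fin.last k)) ≤ 0 := by linarith [hg h]
      have h2 : deriv H (ρ t (i+1) 0) - deriv H (ρ t i (Fin.last k)) ≤ 0 := by
        linarith [hH'.monotone h]
      have hbc : 0 ≤ (g (ρ t (i+1) 0) - g (ρ t i (Fin.last k)))
          * (deriv H (ρ t (i+1) 0) - deriv H (ρ t i (Fin.last k))) := by nlinarith
      calc (0:ℝ) ≤ (α i / 2) * ((g (ρ t (i+1) 0) - g (ρ t i (Fin.last k)))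
          * (deriv H (ρ t (i+1) 0) - deriv H (ρ t i (Fin.last k)))) := mul_nonneg hα2 hbc
        _ = (α i / 2) * (g (ρ t (i+1) 0) - g (ρ t i (Fin.last k)))
          * (deriv H (ρ t (i+1) 0) - deriv H (ρ t i (Fin.last k))) := by ring
  -- the natural derivative of E
  have hEfun : E = fun τ =>
      (∑ i, (hcell i / 2) * ∑ r, w r * (H (ρ τ i r) + V i r * ρ τ i r))
      + (1/2) * ∑ i, ∑ j, (hcell i / 2) * (hcell j / 2) *
          ∑ r, ∑ s, w r * w s * K i j r s * ρ τ i r * ρ τ j s := funext hE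
  have hD : HasDerivAt E
      ((∑ i, (hcell i / 2) * ∑ r, w r * (deriv H (ρ t i r) * ρ' t i r + V i r * ρ' t i r))
      + (1/2) * ∑ i, ∑ j, (hcell i / 2) * (hcell j / 2) *
          ∑ r, ∑ s, (w r * w s * K i j r s * ρ' t i r * ρ t j s
            + w r * w s * K i j r s * ρ t i r * ρ' t j s)) t := by
    rw [hEfun]
    apply HasDerivAt.add
    · apply HasDerivAt.fun_sum
      intro i _
      apply HasDerivAt.const_mul
      apply HasDerivAt.fun_sum
      intro r _
      apply HasDerivAt.const_mul
      exact ((hH (ρ t i r)).hasDerivAt.comp t (hρ t i r)).add ((hρ t i r).const_mul (V i r))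
    · apply HasDerivAt.const_mul
      apply HasDerivAt.fun_sum
      intro i _
      apply HasDerivAt.fun_sum
      intro j _
      apply HasDerivAt.const_mul
      apply HasDerivAt.fun_sum
      intro r _
      apply HasDerivAt.fun_sum
      intro s _
      exact ((hρ t i r).const_mul (w r * w s * K i j r s)).mul (hρ t j s)
  -- symmetry of the interaction term
  have hsym : (∑ i : ZMod N, ∑ j : ZMod N, (hcell i / 2) * (hcell j / 2) *
        ∑ r, ∑ s, w r * w s * K i j r s * ρ t i r * ρ' t j s)
      = ∑ i : ZMod N, ∑ j : ZMod N, (hcell i / 2) * (hcell j / 2) *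
        ∑ r, ∑ s, w r * w s * K i j r s * ρ' t i r * ρ t j s := by
    conv_lhs => rw [Finset.sum_comm]
    refine Finset.sum_congr rfl fun i _ => Finset.sum_congr rfl fun j _ => ?_
    have inner : (∑ r, ∑ s, w r * w s * K j i r s * ρ t j r * ρ' t i s)
        = ∑ r, ∑ s, w r * w s * K i j r s * ρ' t i r * ρ t j s := by
      conv_lhs => rw [Finset.sum_comm]
      refine Finset.sum_congr rfl fun r _ => Finset.sum_congr rfl fun s _ => ?_
      rw [hKsym i j r s]
      ring
    rw [inner]
    ring
  -- rewrite the first chunk of the derivative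
  have keyA : (∑ i : ZMod N, (hcell i / 2) *
        ∑ r, w r * (deriv H (ρ t i r) * ρ' t i r + V i r * ρ' t i r))
      = ∑ i : ZMod N, ∑ r, (deriv H (ρ t i r) + V i r) * ((hcell i / 2) * (w r * ρ' t i r)) := by
    refine Finset.sum_congr rfl fun i _ => ?_
    rw [Finset.mul_sum]
    exact Finset.sum_congr rfl fun r _ => by ring
  -- rewrite the interaction chunk of the derivative
  have keyB : ((1:ℝ)/2) * (∑ i : ZMod N, ∑ j : ZMod N, (hcell i / 2) * (hcell j / 2) *
        ∑ r, ∑ s, (w r * w s * K i j r s * ρ' t i r * ρ t j s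
          + w r * w s * K i j r s * ρ t i r * ρ' t j s))
      = ∑ i : ZMod N, ∑ r, (∑ j, (hcell j / 2) * ∑ s, w s * K i j r s * ρ t j s)
          * ((hcell i / 2) * (w r * ρ' t i r)) := by
    have e1 : (∑ i : ZMod N, ∑ j : ZMod N, (hcell i / 2) * (hcell j / 2) *
          ∑ r, ∑ s, (w r * w s * K i j r s * ρ' t i r * ρ t j s
            + w r * w s * K i j r s * ρ t i r * ρ' t j s))
        = (∑ i : ZMod N, ∑ j : ZMod N, (hcell i / 2) * (hcell j / 2) *
            ∑ r, ∑ s, w r * w s * K i j r s * ρ' t i r * ρ t j s)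
          + ∑ i : ZMod N, ∑ j : ZMod N, (hcell i / 2) * (hcell j / 2) *
            ∑ r, ∑ s, w r * w s * K i j r s * ρ t i r * ρ' t j s := by
      simp only [Finset.sum_add_distrib, mul_add]
    rw [e1, hsym]
    have e2 : ∀ i : ZMod N, (∑ j : ZMod N, (hcell i / 2) * (hcell j / 2) *
          ∑ r, ∑ s, w r * w s * K i j r s * ρ' t i r * ρ t j s)
        = ∑ r, (∑ j, (hcell j / 2) * ∑ s, w s * K i j r s * ρ t j s)
            * ((hcell i / 2) * (w r * ρ' t i r)) := by
      intro i
      calc (∑ j : ZMod N, (hcell i / 2) * (hcell j / 2) *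
            ∑ r, ∑ s, w r * w s * K i j r s * ρ' t i r * ρ t j s)
          = ∑ j : ZMod N, ∑ r, (hcell i / 2) * (hcell j / 2) *
              ∑ s, w r * w s * K i j r s * ρ' t i r * ρ t j s := by
            exact Finset.sum_congr rfl fun j _ => Finset.mul_sum _ _ _
        _ = ∑ r, ∑ j : ZMod N, (hcell i / 2) * (hcell j / 2) *
              ∑ s, w r * w s * K i j r s * ρ' t i r * ρ t j s := Finset.sum_comm
        _ = ∑ r, (∑ j, (hcell j / 2) * ∑ s, w s * K i j r s * ρ t j s)
              * ((hcell i / 2) * (w r * ρ' t i r)) := by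
            refine Finset.sum_congr rfl fun r _ => ?_
            rw [Finset.sum_mul]
            refine Finset.sum_congr rfl fun j _ => ?_
            simp only [Finset.mul_sum, Finset.sum_mul]
            exact Finset.sum_congr rfl fun s _ => by ring
    rw [Finset.sum_congr rfl fun i _ => e2 i]
    ring
  -- the derivative as a ξ-weighted sum
  have key : ((∑ i : ZMod N, (hcell i / 2) *
        ∑ r, w r * (deriv H (ρ t i r) * ρ' t i r + V i r * ρ' t i r))
      + (1/2) * ∑ i : ZMod N, ∑ j : ZMod N, (hcell i / 2) * (hcell j / 2) *
          ∑ r, ∑ s, (w r * w s * K i j r s * ρ' t i r * ρ t j s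
            + w r * w s * K i j r s * ρ t i r * ρ' t j s))
      = ∑ i : ZMod N, ∑ r, ξ t i r * ((hcell i / 2) * (w r * ρ' t i r)) := by
    rw [keyA, keyB, ← Finset.sum_add_distrib]
    refine Finset.sum_congr rfl fun i _ => ?_
    rw [← Finset.sum_add_distrib]
    refine Finset.sum_congr rfl fun r _ => ?_
    rw [hξ t i r]
    ring
  -- use the scheme and summation by parts cellwise
  have stepA : (∑ i : ZMod N, ∑ r, ξ t i r * ((hcell i / 2) * (w r * ρ' t i r)))
      = ∑ i : ZMod N,
          ((∑ r, ((Dᵀ * M) *ᵥ ξ t i) r * (f (ρ t i r) * u t i r))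
          - (∑ r, ξ t i r * ((B *ᵥ (fun r => f (ρ t i r) * u t i r)) r))
          + ∑ r, ξ t i r * ((B *ᵥ Fstar t i) r)) := by
    refine Finset.sum_congr rfl fun i _ => ?_
    have h1 : ∑ r, ξ t i r * ((hcell i / 2) * (w r * ρ' t i r))
        = ∑ r, ξ t i r * (-(((Dᵀ * M) *ᵥ (fun r => f (ρ t i r) * u t i r)) r)
            + (B *ᵥ Fstar t i) r) :=
      Finset.sum_congr rfl fun r _ => by rw [hcomp_scheme i r]
    rw [h1]
    have h2 := hSBPdot (ξ t i) (fun r => f (ρ t i r) * u t i r)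
    simp only [mul_add, mul_neg, Finset.sum_add_distrib, Finset.sum_neg_distrib]
    linarith [h2]
  -- evaluate the three cellwise sums
  have stepB : ∀ i : ZMod N, ∑ r, ((Dᵀ * M) *ᵥ ξ t i) r * (f (ρ t i r) * u t i r)
      = (f (ρ t i (Fin.last k)) * u t i (Fin.last k)) * ξhat t i
        - (f (ρ t i 0) * u t i 0) * ξhat t (i-1)
        - (hcell i / 2) * ∑ r, w r * f (ρ t i r) * (u t i r)^2 := by
    intro i
    have h1 : ∑ r, ((Dᵀ * M) *ᵥ ξ t i) r * (f (ρ t i r) * u t i r)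
        = ∑ r, ((f (ρ t i r) * u t i r) * (B *ᵥ ξstar t i) r
            - (hcell i / 2) * (w r * f (ρ t i r) * (u t i r)^2)) :=
      Finset.sum_congr rfl fun r _ => by rw [hcomp_u i r]; ring
    rw [h1, Finset.sum_sub_distrib]
    have h2 := hBdot (ξstar t i) (fun r => f (ρ t i r) * u t i r)
    rw [hξstarL, hξstar0] at h2
    rw [h2, ← Finset.mul_sum]
  have stepC : ∀ i : ZMod N, ∑ r, ξ t i r * ((B *ᵥ (fun r => f (ρ t i r) * u t i r)) r)
      = ξ t i (Fin.last k) * (f (ρ t i (Fin.last k)) * u t i (Fin.last k))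
        - ξ t i 0 * (f (ρ t i 0) * u t i 0) := by
    intro i
    have h := hBdot (fun r => f (ρ t i r) * u t i r) (ξ t i)
    exact h
  have stepD : ∀ i : ZMod N, ∑ r, ξ t i r * ((B *ᵥ Fstar t i) r)
      = ξ t i (Fin.last k) * Fhat t i - ξ t i 0 * Fhat t (i-1) := by
    intro i
    have h := hBdot (Fstar t i) (ξ t i)
    rw [hFstarL, hFstar0] at h
    exact h
  -- collect into dissipation plus interface terms
  have stepE : (∑ i : ZMod N, ∑ r, ξ t i r * ((hcell i / 2) * (w r * ρ' t i r)))
      = -(∑ i, (hcell i / 2) * ∑ r, w r * f (ρ t i r) * (u t i r)^2)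
        + (∑ i : ZMod N, ((f (ρ t i (Fin.last k)) * u t i (Fin.last k)) * ξhat t i
            - ξ t i (Fin.last k) * (f (ρ t i (Fin.last k)) * u t i (Fin.last k))
            + ξ t i (Fin.last k) * Fhat t i)
          + ∑ i : ZMod N, (-((f (ρ t i 0) * u t i 0) * ξhat t (i-1))
            + ξ t i 0 * (f (ρ t i 0) * u t i 0)
            - ξ t i 0 * Fhat t (i-1))) := by
    rw [stepA, Finset.sum_congr rfl fun i _ => by rw [stepB i, stepC i, stepD i]]
    rw [← Finset.sum_neg_distrib, ← Finset.sum_add_distrib, ← Finset.sum_add_distrib]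
    exact Finset.sum_congr rfl fun i _ => by ring
  -- reindex the interface sums
  have stepF : (∑ i : ZMod N, (-((f (ρ t i 0) * u t i 0) * ξhat t (i-1))
        + ξ t i 0 * (f (ρ t i 0) * u t i 0)
        - ξ t i 0 * Fhat t (i-1)))
      = ∑ i : ZMod N, (-((f (ρ t (i+1) 0) * u t (i+1) 0) * ξhat t i)
        + ξ t (i+1) 0 * (f (ρ t (i+1) 0) * u t (i+1) 0)
        - ξ t (i+1) 0 * Fhat t i) := by
    rw [← hreindex (fun j => -((f (ρ t (j+1) 0) * u t (j+1) 0) * ξhat t j)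
      + ξ t (j+1) 0 * (f (ρ t (j+1) 0) * u t (j+1) 0)
      - ξ t (j+1) 0 * Fhat t j)]
    refine Finset.sum_congr rfl fun i _ => ?_
    rw [sub_add_cancel]
  -- evaluate the interface contribution
  have stepG : (∑ i : ZMod N, ((f (ρ t i (Fin.last k)) * u t i (Fin.last k)) * ξhat t i
        - ξ t i (Fin.last k) * (f (ρ t i (Fin.last k)) * u t i (Fin.last k))
        + ξ t i (Fin.last k) * Fhat t i))
      + (∑ i : ZMod N, (-((f (ρ t (i+1) 0) * u t (i+1) 0) * ξhat t i)
        + ξ t (i+1) 0 * (f (ρ t (i+1) 0) * u t (i+1) 0)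
        - ξ t (i+1) 0 * Fhat t i))
      = - ∑ i, (α i / 2) * (g (ρ t (i+1) 0) - g (ρ t i (Fin.last k)))
          * (deriv H (ρ t (i+1) 0) - deriv H (ρ t i (Fin.last k))) := by
    rw [← Finset.sum_add_distrib, ← Finset.sum_neg_distrib]
    refine Finset.sum_congr rfl fun i _ => ?_
    have hj : ξ t i (Fin.last k) - ξ t (i+1) 0
        = -(deriv H (ρ t (i+1) 0) - deriv H (ρ t i (Fin.last k))) := by
      have := hjump i
      linarith
    calc ((f (ρ t i (Fin.last k)) * u t i (Fin.last k)) * ξhat t i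
          - ξ t i (Fin.last k) * (f (ρ t i (Fin.last k)) * u t i (Fin.last k))
          + ξ t i (Fin.last k) * Fhat t i)
        + (-((f (ρ t (i+1) 0) * u t (i+1) 0) * ξhat t i)
          + ξ t (i+1) 0 * (f (ρ t (i+1) 0) * u t (i+1) 0)
          - ξ t (i+1) 0 * Fhat t i)
        = (ξ t i (Fin.last k) - ξ t (i+1) 0)
            * ((α i / 2) * (g (ρ t (i+1) 0) - g (ρ t i (Fin.last k)))) := by
          rw [hξhat t i, hFhat t i]
          ring
      _ = -(deriv H (ρ t (i+1) 0) - deriv H (ρ t i (Fin.last k)))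
            * ((α i / 2) * (g (ρ t (i+1) 0) - g (ρ t i (Fin.last k)))) := by rw [hj]
      _ = -((α i / 2) * (g (ρ t (i+1) 0) - g (ρ t i (Fin.last k)))
            * (deriv H (ρ t (i+1) 0) - deriv H (ρ t i (Fin.last k)))) := by ring
  -- assemble the exact entropy identity
  have hfinal : ((∑ i : ZMod N, (hcell i / 2) *
        ∑ r, w r * (deriv H (ρ t i r) * ρ' t i r + V i r * ρ' t i r))
      + (1/2) * ∑ i : ZMod N, ∑ j : ZMod N, (hcell i / 2) * (hcell j / 2) *
          ∑ r, ∑ s, (w r * w s * K i j r s * ρ' t i r * ρ t j s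
            + w r * w s * K i j r s * ρ t i r * ρ' t j s))
      = -(∑ i, (hcell i / 2) * ∑ r, w r * f (ρ t i r) * (u t i r)^2)
        - ∑ i, (α i / 2) * (g (ρ t (i+1) 0) - g (ρ t i (Fin.last k)))
            * (deriv H (ρ t (i+1) 0) - deriv H (ρ t i (Fin.last k))) := by
    rw [key, stepE, stepF, stepG]
    ring
  refine ⟨hfinal ▸ hD, by linarith, hI⟩
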